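/- Let d ≥ 2 be an integer, 1 < α < 2, 0 < γ ≤ 2. There exists a constant N > 0, depending only on d, α, γ, such that for every nonnegative f ∈ C_c(ℝ^{d+1}) and every ρ > 0, ∫∫_{{(s,y) : 0 ≤ s ≤ |y|^α, |y| ≤ ρ}} |y|^{αγ/2 − d − α} f(s,y) dy ds ≤ N ρ^{αγ/2} M f(0,0). -/

import Mathlib

open MeasureTheory ENNReal Set Filter

noncomputable section

/-- The spatial space `ℝ^d`. -/
abbrev Spc (d : ℕ) := EuclideanSpace ℝ (Fin d)

/-- Parabolic cylinder `C_ρ(t,x) = {(s,y) : t ≤ s ≤ t + ρ^α, |y - x| ≤ ρ}`. -/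
def cylP (d : ℕ) (α ρ t : ℝ) (x : Spc d) : Set (ℝ × Spc d) :=
  {p | t ≤ p.1 ∧ p.1 ≤ t + ρ ^ α ∧ dist p.2 x ≤ ρ}

/-- Average of `f` over the parabolic cylinder `C_ρ(t,x)`. -/
def cylAvg (d : ℕ) (α ρ t : ℝ) (x : Spc d) (f : ℝ × Spc d → ℝ≥0∞) : ℝ≥0∞ :=
  (volume (cylP d α ρ t x))⁻¹ * ∫⁻ p in cylP d α ρ t x, f p

/-- Parabolic Morrey norm `‖v‖_{E_q}`. -/
def morreyE (d : ℕ) (α q : ℝ) (v : ℝ × Spc d → ℝ≥0∞) : ℝ≥0∞ :=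
  ⨆ (ρ : ℝ) (_ : 0 < ρ) (t : ℝ) (x : Spc d),
    ENNReal.ofReal ρ * (cylAvg d α ρ t x (fun p => v p ^ q)) ^ (1 / q)

/-- Elliptic Morrey norm `‖w‖_{M_q}` on `ℝ^d`. -/
def morreyM (d : ℕ) (q : ℝ) (w : Spc d → ℝ≥0∞) : ℝ≥0∞ :=
  ⨆ (ρ : ℝ) (_ : 0 < ρ) (x : Spc d),
    ENNReal.ofReal ρ *
      ((volume (Metric.closedBall x ρ))⁻¹ *
        ∫⁻ y in Metric.closedBall x ρ, w y ^ q) ^ (1 / q)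

/-- Fractional (parabolic) maximal function `M_β f(t,x)`. -/
def maxFun (d : ℕ) (α β : ℝ) (f : ℝ × Spc d → ℝ≥0∞) (t : ℝ) (x : Spc d) : ℝ≥0∞ :=
  ⨆ (ρ : ℝ) (_ : 0 < ρ), ENNReal.ofReal (ρ ^ β) * cylAvg d α ρ t x f

/-- Uncentered parabolic maximal function `M̂ f(z)`, sup over all parabolic
cylinders containing `z`. -/
def hatM (d : ℕ) (α : ℝ) (f : ℝ × Spc d → ℝ≥0∞) (z : ℝ × Spc d) : ℝ≥0∞ :=
  ⨆ (ρ : ℝ) (_ : 0 < ρ) (t : ℝ) (x : Spc d) (_ : z ∈ cylP d α ρ t x),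
    cylAvg d α ρ t x f

/-- The kernel `p_γ(s,y) = 1_{s>0} s^{γ/2} min(|y|^{-d-α}, s^{-(d+α)/α})`. -/
def pKer (d : ℕ) (α γ : ℝ) (s : ℝ) (y : Spc d) : ℝ≥0∞ :=
  if 0 < s then
    (if s ^ (1 / α) ≤ ‖y‖ then ENNReal.ofReal (s ^ (γ / 2) * ‖y‖ ^ (-(d : ℝ) - α))
     else ENNReal.ofReal (s ^ (γ / 2 - ((d : ℝ) + α) / α)))
  else 0

/-- `P_γ f(t,x) = ∫ p_γ(s,y) f(t+s, x+y) dy ds`. -/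
def Pop (d : ℕ) (α γ : ℝ) (f : ℝ × Spc d → ℝ≥0∞) (t : ℝ) (x : Spc d) : ℝ≥0∞ :=
  ∫⁻ p : ℝ × Spc d, pKer d α γ p.1 p.2 * f (t + p.1, x + p.2)

/-- `P*_γ f(t,x) = ∫ p_γ(s,y) f(t-s, x+y) dy ds`. -/
def PopStar (d : ℕ) (α γ : ℝ) (f : ℝ × Spc d → ℝ≥0∞) (t : ℝ) (x : Spc d) : ℝ≥0∞ :=
  ∫⁻ p : ℝ × Spc d, pKer d α γ p.1 p.2 * f (t - p.1, x + p.2)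


/-- near-field estimate over the region `Q ∩ C_ρ(0,0)`, where
`Q = {(s,y) : |y| ≥ s^{1/α}}`:
`∫∫_{0 ≤ s ≤ |y|^α, |y| ≤ ρ} |y|^{αγ/2-d-α} f(s,y) dy ds ≤ N ρ^{αγ/2} M f(0,0)`. -/
theorem stmt_8 (d : ℕ) (hd : 2 ≤ d) (α γ : ℝ) (hα1 : 1 < α) (hα2 : α < 2)
    (hγ1 : 0 < γ) (hγ2 : γ ≤ 2) :
    ∃ N : ℝ, 0 < N ∧
      ∀ (f : ℝ × Spc d → ℝ), Continuous f → HasCompactSupport f → (∀ z, 0 ≤ f z) →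
      ∀ (ρ : ℝ), 0 < ρ →
      (∫⁻ z in {z : ℝ × Spc d | 0 ≤ z.1 ∧ z.1 ≤ ‖z.2‖ ^ α ∧ ‖z.2‖ ≤ ρ},
          ENNReal.ofReal (‖z.2‖ ^ (α * γ / 2 - d - α) * f z)) ≤
        ENNReal.ofReal (N * ρ ^ (α * γ / 2)) *
          maxFun d α 0 (fun z => ENNReal.ofReal (f z)) 0 0 := by
  have hα0 : (0:ℝ) < α := by linarith
  have hd' : (2:ℝ) ≤ d := by exact_mod_cast hd
  set β : ℝ := α * γ / 2 with hβ
  have hβpos : 0 < β := by positivity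
  have hβle : β ≤ α := by rw [hβ]; nlinarith
  set e : ℝ := β - d - α with he
  have heneg : e < 0 := by rw [he]; linarith
  set V : ℝ≥0∞ := volume (Metric.closedBall (0:Spc d) 1) with hVdef
  have hV0 : V ≠ 0 := (Metric.measure_closedBall_pos volume 0 one_pos).ne'
  have hVtop : V ≠ ⊤ := measure_closedBall_lt_top.ne
  have hVr : 0 < V.toReal := ENNReal.toReal_pos hV0 hVtop
  have h2e : (0:ℝ) < (2:ℝ) ^ (-e) := Real.rpow_pos_of_pos two_pos _
  have h2β1 : (2:ℝ) ^ (-β) < 1 :=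
    Real.rpow_lt_one_of_one_lt_of_neg one_lt_two (by linarith)
  have h2β0 : (0:ℝ) < (2:ℝ) ^ (-β) := Real.rpow_pos_of_pos two_pos _
  have hsub1 : (0:ℝ) < 1 - (2:ℝ)^(-β) := by linarith
  refine ⟨(2:ℝ)^(-e) * (1 - (2:ℝ)^(-β))⁻¹ * V.toReal, by positivity, ?_⟩
  intro f hf hsupp hf0 ρ hρ
  set F : ℝ × Spc d → ℝ≥0∞ := fun z => ENNReal.ofReal (f z) with hF
  have hFmeas : Measurable F := hf.measurable.ennreal_ofReal
  set M : ℝ≥0∞ := maxFun d α 0 F 0 0 with hM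
  -- volume of cylinders
  have hvol : ∀ r : ℝ, 0 < r → volume (cylP d α r 0 0)
      = ENNReal.ofReal (r ^ α * r ^ (d:ℕ)) * V := by
    intro r hr
    have hset : cylP d α r 0 0 = Set.Icc (0:ℝ) (0 + r ^ α) ×ˢ Metric.closedBall (0:Spc d) r := by
      ext p
      simp [cylP, Set.mem_Icc, Metric.mem_closedBall, and_assoc]
    rw [hset, Measure.volume_eq_prod, Measure.prod_prod, Real.volume_Icc,
      Measure.addHaar_closedBall' volume 0 hr.le, finrank_euclideanSpace_fin,
      ← mul_assoc, ← ENNReal.ofReal_mul (by simpa using Real.rpow_nonneg hr.le α)]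
    norm_num
    rfl
  -- cylinder integral bound
  have cylBound : ∀ r : ℝ, 0 < r →
      ∫⁻ z in cylP d α r 0 0, F z ≤ (ENNReal.ofReal (r ^ α * r ^ (d:ℕ)) * V) * M := by
    intro r hr
    have hv := hvol r hr
    have hvol0 : volume (cylP d α r 0 0) ≠ 0 := by
      rw [hv]
      exact mul_ne_zero (ENNReal.ofReal_pos.mpr (by positivity)).ne' hV0
    have hvoltop : volume (cylP d α r 0 0) ≠ ⊤ := by
      rw [hv]; exact ENNReal.mul_ne_top ENNReal.ofReal_ne_top hVtop
    have havg : cylAvg d α r 0 0 F ≤ M := by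
      rw [hM, maxFun]
      refine le_trans ?_ (le_iSup₂ (f := fun (ρ:ℝ) (_ : 0 < ρ) =>
        ENNReal.ofReal (ρ ^ (0:ℝ)) * cylAvg d α ρ 0 0 F) r hr)
      simp [Real.rpow_zero]
    calc ∫⁻ z in cylP d α r 0 0, F z
        = volume (cylP d α r 0 0) * cylAvg d α r 0 0 F := by
          rw [cylAvg, ← mul_assoc, ENNReal.mul_inv_cancel hvol0 hvoltop, one_mul]
      _ ≤ volume (cylP d α r 0 0) * M := mul_le_mul_right havg _
      _ = _ := by rw [hv]
  -- dyadic radii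
  set r : ℕ → ℝ := fun k => ρ / 2 ^ k with hrdef
  have hrpos : ∀ k, 0 < r k := fun k => div_pos hρ (by positivity)
  set A : ℕ → Set (ℝ × Spc d) := fun k =>
    {z : ℝ × Spc d | 0 ≤ z.1 ∧ z.1 ≤ ‖z.2‖ ^ α ∧ r (k+1) < ‖z.2‖ ∧ ‖z.2‖ ≤ r k} with hA
  set T : Set (ℝ × Spc d) := (({(0:ℝ)} : Set ℝ) ×ˢ (Set.univ : Set (Spc d))) with hT
  have hcover : {z : ℝ × Spc d | 0 ≤ z.1 ∧ z.1 ≤ ‖z.2‖ ^ α ∧ ‖z.2‖ ≤ ρ} ⊆ T ∪ ⋃ k, A k := by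
    rintro ⟨s, y⟩ ⟨hs0, hsy, hyρ⟩
    rcases eq_or_lt_of_le (norm_nonneg y) with h0 | h0
    · left
      have hy0 : ‖y‖ = 0 := h0.symm
      have hs : s = 0 := le_antisymm (by
        rw [hy0, Real.zero_rpow hα0.ne'] at hsy; exact hsy) hs0
      simp [hT, hs]
    · right
      have hx1 : (1:ℝ) ≤ ρ / ‖y‖ := (one_le_div h0).mpr hyρ
      have hx0 : (0:ℝ) < ρ / ‖y‖ := lt_of_lt_of_le one_pos hx1
      have hlog0 : 0 ≤ Int.log 2 (ρ / ‖y‖) := by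
        have h := Int.log_mono_right (b := 2) one_pos hx1
        simpa using h
      obtain ⟨k, hk1, hk2⟩ : ∃ k : ℕ, (2:ℝ) ^ k ≤ ρ / ‖y‖ ∧ ρ / ‖y‖ < (2:ℝ) ^ (k + 1) := by
        refine ⟨(Int.log 2 (ρ / ‖y‖)).toNat, ?_, ?_⟩
        · have h := Int.zpow_log_le_self (b := 2) (R := ℝ) one_lt_two hx0
          rwa [← zpow_natCast (2:ℝ), Int.toNat_of_nonneg hlog0]
        · have h := Int.lt_zpow_succ_log_self (b := 2) (R := ℝ) one_lt_two (ρ / ‖y‖)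
          rwa [← zpow_natCast (2:ℝ), show (((Int.log 2 (ρ / ‖y‖)).toNat + 1 : ℕ) : ℤ)
            = Int.log 2 (ρ / ‖y‖) + 1 by rw [Nat.cast_add, Int.toNat_of_nonneg hlog0]; rfl]
      have hle : ‖y‖ ≤ r k := by
        have h := (le_div_iff₀ h0).mp hk1
        rw [hrdef]
        exact (le_div_iff₀ (by positivity)).mpr (by rw [mul_comm]; exact h)
      have hlt : r (k+1) < ‖y‖ := by
        have h := (div_lt_iff₀ h0).mp hk2
        rw [hrdef]
        exact (div_lt_iff₀ (by positivity)).mpr (by rw [mul_comm]; exact h)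
      exact Set.mem_iUnion.mpr ⟨k, hs0, hsy, hlt, hle⟩
  have hTnull : volume T = 0 := by
    rw [hT, Measure.volume_eq_prod, Measure.prod_prod, Real.volume_singleton, zero_mul]
  -- key real identity
  have h2 : (0:ℝ) ≤ 2 := by norm_num
  have hrk : ∀ m : ℕ, r m = ρ * (2:ℝ) ^ (-(m:ℝ)) := by
    intro m
    rw [hrdef, Real.rpow_neg h2, Real.rpow_natCast]
    ring
  have emul : ∀ (a x : ℝ), (ρ * (2:ℝ) ^ a) ^ x = ρ ^ x * (2:ℝ) ^ (a * x) := by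
    intro a x
    rw [Real.mul_rpow hρ.le (Real.rpow_nonneg h2 a), ← Real.rpow_mul h2]
  have key : ∀ k : ℕ, (r (k+1)) ^ e * ((r k) ^ α * (r k) ^ (d:ℕ))
      = (ρ ^ β * (2:ℝ) ^ (-e)) * ((2:ℝ) ^ (-β)) ^ k := by
    intro k
    rw [← Real.rpow_natCast (r k) d, hrk, hrk, emul, emul, emul,
      ← Real.rpow_natCast ((2:ℝ) ^ (-β)) k, ← Real.rpow_mul h2]
    have e1 : ρ ^ e * ρ ^ α * ρ ^ (d:ℝ) = ρ ^ β := by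
      rw [← Real.rpow_add hρ, ← Real.rpow_add hρ]
      congr 1
      rw [he]; ring
    have e2 : (2:ℝ) ^ (-((k:ℝ)+1) * e) * ((2:ℝ) ^ (-(k:ℝ) * α) * (2:ℝ) ^ (-(k:ℝ) * (d:ℝ)))
        = (2:ℝ) ^ (-e) * (2:ℝ) ^ (-β * (k:ℝ)) := by
      rw [← Real.rpow_add two_pos, ← Real.rpow_add two_pos, ← Real.rpow_add two_pos]
      congr 1
      rw [he]; ring
    push_cast
    calc ρ ^ e * (2:ℝ) ^ (-((k:ℝ)+1) * e) * (ρ ^ α * (2:ℝ) ^ (-(k:ℝ) * α) * (ρ ^ (d:ℝ) * (2:ℝ) ^ (-(k:ℝ) * (d:ℝ))))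
        = (ρ ^ e * ρ ^ α * ρ ^ (d:ℝ)) * ((2:ℝ) ^ (-((k:ℝ)+1) * e) * ((2:ℝ) ^ (-(k:ℝ) * α) * (2:ℝ) ^ (-(k:ℝ) * (d:ℝ)))) := by ring
      _ = ρ ^ β * ((2:ℝ) ^ (-e) * (2:ℝ) ^ (-β * (k:ℝ))) := by rw [e1, e2]
      _ = ρ ^ β * (2:ℝ) ^ (-e) * (2:ℝ) ^ (-β * (k:ℝ)) := by ring
  -- per-annulus bound
  have hAk : ∀ k : ℕ, (∫⁻ z in A k, ENNReal.ofReal (‖z.2‖ ^ e * f z))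
      ≤ ENNReal.ofReal (ρ ^ β * (2:ℝ) ^ (-e)) * (ENNReal.ofReal ((2:ℝ) ^ (-β))) ^ k * (V * M) := by
    intro k
    have hb1 : (∫⁻ z in A k, ENNReal.ofReal (‖z.2‖ ^ e * f z))
        ≤ ∫⁻ z in A k, ENNReal.ofReal ((r (k+1)) ^ e) * F z := by
      refine setLIntegral_mono (hFmeas.const_mul _) ?_
      intro z hz
      obtain ⟨hz1, hz2, hz3, hz4⟩ := hz
      have hab : ‖z.2‖ ^ e ≤ (r (k+1)) ^ e :=
        Real.rpow_le_rpow_of_nonpos (hrpos (k+1)) hz3.le heneg.le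
      calc ENNReal.ofReal (‖z.2‖ ^ e * f z) ≤ ENNReal.ofReal ((r (k+1)) ^ e * f z) :=
            ENNReal.ofReal_le_ofReal (mul_le_mul_of_nonneg_right hab (hf0 z))
        _ = _ := ENNReal.ofReal_mul (Real.rpow_nonneg (hrpos _).le _)
    have hb2 : A k ⊆ cylP d α (r k) 0 0 := by
      rintro ⟨s, y⟩ ⟨h1', h2', h3', h4'⟩
      refine ⟨h1', ?_, by simpa [dist_zero_right] using h4'⟩
      calc s ≤ ‖y‖ ^ α := h2'
        _ ≤ (r k) ^ α := Real.rpow_le_rpow (norm_nonneg _) h4' hα0.le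
        _ = 0 + (r k) ^ α := (zero_add _).symm
    calc (∫⁻ z in A k, ENNReal.ofReal (‖z.2‖ ^ e * f z))
        ≤ ∫⁻ z in A k, ENNReal.ofReal ((r (k+1)) ^ e) * F z := hb1
      _ = ENNReal.ofReal ((r (k+1)) ^ e) * ∫⁻ z in A k, F z :=
          lintegral_const_mul' _ _ ENNReal.ofReal_ne_top
      _ ≤ ENNReal.ofReal ((r (k+1)) ^ e) * ∫⁻ z in cylP d α (r k) 0 0, F z := by
          exact mul_le_mul_right (lintegral_mono_set hb2) _
      _ ≤ ENNReal.ofReal ((r (k+1)) ^ e) * ((ENNReal.ofReal ((r k) ^ α * (r k) ^ (d:ℕ)) * V) * M) :=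
          mul_le_mul_right (cylBound (r k) (hrpos k)) _
      _ = ENNReal.ofReal ((r (k+1)) ^ e * ((r k) ^ α * (r k) ^ (d:ℕ))) * (V * M) := by
          rw [ENNReal.ofReal_mul (q := (r k) ^ α * (r k) ^ (d:ℕ))
            (Real.rpow_nonneg (hrpos (k+1)).le e)]
          ac_rfl
      _ = _ := by
          rw [key k, ENNReal.ofReal_mul (mul_nonneg (Real.rpow_nonneg hρ.le _) (Real.rpow_nonneg h2 _)),
            ENNReal.ofReal_pow (Real.rpow_nonneg h2 _)]
  -- summation
  have hq : (1 - ENNReal.ofReal ((2:ℝ) ^ (-β)))⁻¹ = ENNReal.ofReal ((1 - (2:ℝ) ^ (-β))⁻¹) := by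
    rw [ENNReal.ofReal_inv_of_pos hsub1, ENNReal.ofReal_sub _ h2β0.le, ENNReal.ofReal_one]
  calc (∫⁻ z in {z : ℝ × Spc d | 0 ≤ z.1 ∧ z.1 ≤ ‖z.2‖ ^ α ∧ ‖z.2‖ ≤ ρ},
          ENNReal.ofReal (‖z.2‖ ^ e * f z))
      ≤ ∫⁻ z in T ∪ ⋃ k, A k, ENNReal.ofReal (‖z.2‖ ^ e * f z) := lintegral_mono_set hcover
    _ ≤ (∫⁻ z in T, ENNReal.ofReal (‖z.2‖ ^ e * f z))
        + ∫⁻ z in ⋃ k, A k, ENNReal.ofReal (‖z.2‖ ^ e * f z) := lintegral_union_le _ _ _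
    _ = ∫⁻ z in ⋃ k, A k, ENNReal.ofReal (‖z.2‖ ^ e * f z) := by
        rw [setLIntegral_measure_zero _ _ hTnull, zero_add]
    _ ≤ ∑' k, ∫⁻ z in A k, ENNReal.ofReal (‖z.2‖ ^ e * f z) := lintegral_iUnion_le _ _
    _ ≤ ∑' k, ENNReal.ofReal (ρ ^ β * (2:ℝ) ^ (-e)) * (ENNReal.ofReal ((2:ℝ) ^ (-β))) ^ k * (V * M) :=
        ENNReal.tsum_le_tsum hAk
    _ = ENNReal.ofReal (ρ ^ β * (2:ℝ) ^ (-e)) * (V * M) * ∑' k, (ENNReal.ofReal ((2:ℝ) ^ (-β))) ^ k := by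
        rw [← ENNReal.tsum_mul_left]
        congr 1
        ext k
        ac_rfl
    _ = ENNReal.ofReal (ρ ^ β * (2:ℝ) ^ (-e)) * (V * M) * ENNReal.ofReal ((1 - (2:ℝ) ^ (-β))⁻¹) := by
        rw [ENNReal.tsum_geometric, hq]
    _ = (ENNReal.ofReal (ρ ^ β * (2:ℝ) ^ (-e)) * ENNReal.ofReal V.toReal
          * ENNReal.ofReal ((1 - (2:ℝ) ^ (-β))⁻¹)) * M := by
        rw [ENNReal.ofReal_toReal hVtop]; ac_rfl
    _ = ENNReal.ofReal ((2:ℝ) ^ (-e) * (1 - (2:ℝ) ^ (-β))⁻¹ * V.toReal * ρ ^ β) * M := by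
        rw [← ENNReal.ofReal_mul (mul_nonneg (Real.rpow_nonneg hρ.le _) (Real.rpow_nonneg h2 _)),
          ← ENNReal.ofReal_mul (by positivity)]
        congr 2
        ring
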